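/- If P is a set of filtered quadratic relations of PBW type for T/⟨P⟩ (i.e. ⟨π(P)⟩ = ⟨LH(⟨P⟩)⟩), then ⟨P⟩ ∩ F^1(T) = {0}. -/

import Mathlib

/-- The `m`-th filtered component of a graded algebra. -/
def filt {k T : Type*} [CommSemiring k] [Ring T] [Algebra k T]
    (𝒜 : ℕ → Submodule k T) (m : ℕ) : Submodule k T :=
  ⨆ i ≤ m, 𝒜 i

/-- The leading homogeneous part of an element of a graded algebra. -/
noncomputable def LH {k T : Type*} [CommSemiring k] [Ring T] [Algebra k T]
    (𝒜 : ℕ → Submodule k T) [GradedAlgebra 𝒜] (f : T) : T :=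
  GradedAlgebra.proj 𝒜 (sSup {i | GradedAlgebra.proj 𝒜 i f ≠ 0}) f

/-- The two-sided ideal generated by a subset, as a `k`-submodule. -/
def twoSidedSpan (k : Type*) {T : Type*} [CommSemiring k] [Ring T] [Algebra k T]
    (P : Set T) : Submodule k T :=
  Submodule.span k {x | ∃ a b : T, ∃ p ∈ P, x = a * p * b}

lemma proj_sandwich_eq_zero {k T : Type*} [Field k] [Ring T] [Algebra k T]
    (𝒜 : ℕ → Submodule k T) [GradedAlgebra 𝒜] {q : T} (hq : q ∈ 𝒜 2)
    {i : ℕ} (hi : i < 2) (a b : T) :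
    GradedAlgebra.proj 𝒜 i (a * q * b) = 0 := by
  induction a using DirectSum.Decomposition.inductionOn 𝒜 generalizing b with
  | zero => simp
  | homogeneous a =>
    rename_i j
    obtain ⟨a, ha⟩ := a
    induction b using DirectSum.Decomposition.inductionOn 𝒜 with
    | zero => simp
    | homogeneous b =>
      rename_i l
      obtain ⟨b, hb⟩ := b
      have hmem : a * q * b ∈ 𝒜 (j + 2 + l) :=
        SetLike.mul_mem_graded (SetLike.mul_mem_graded ha hq) hb
      rw [GradedAlgebra.proj_apply, DirectSum.decompose_of_mem_ne 𝒜 hmem (by omega)]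
    | add b₁ b₂ hb₁ hb₂ =>
      rw [mul_add, map_add, hb₁, hb₂, add_zero]
  | add a₁ a₂ ha₁ ha₂ =>
    rw [add_mul, add_mul, map_add, ha₁, ha₂, add_zero]

/-- if `P ⊆ F²(T)` is of PBW type, i.e. `⟨π(P)⟩ = ⟨LH(⟨P⟩)⟩`, then
`⟨P⟩ ∩ F¹(T) = {0}`. -/
theorem stmt1 {k T : Type*} [Field k] [Ring T] [Algebra k T]
    (𝒜 : ℕ → Submodule k T) [GradedAlgebra 𝒜]
    (P : Set T) (hP : P ⊆ (filt 𝒜 2 : Set T))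
    (hPBW : twoSidedSpan k ((GradedAlgebra.proj 𝒜 2 : T →ₗ[k] T) '' P) =
      twoSidedSpan k (LH 𝒜 '' (twoSidedSpan k P : Set T))) :
    twoSidedSpan k P ⊓ filt 𝒜 1 = ⊥ := by
  -- the span of degree-2 parts kills projections in degree < 2
  have hM : ∀ x ∈ twoSidedSpan k ((GradedAlgebra.proj 𝒜 2 : T →ₗ[k] T) '' P),
      ∀ i < 2, GradedAlgebra.proj 𝒜 i x = 0 := by
    intro x hx i hi
    have : twoSidedSpan k ((GradedAlgebra.proj 𝒜 2 : T →ₗ[k] T) '' P) ≤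
        LinearMap.ker (GradedAlgebra.proj 𝒜 i) := by
      apply Submodule.span_le.mpr
      rintro y ⟨a, b, p, ⟨r, hr, rfl⟩, rfl⟩
      have hq : GradedAlgebra.proj 𝒜 2 r ∈ 𝒜 2 := by
        rw [GradedAlgebra.proj_apply]; exact SetLike.coe_mem _
      exact proj_sandwich_eq_zero 𝒜 hq hi a b
    exact this hx
  rw [eq_bot_iff]
  rintro x ⟨hxI, hxF⟩
  rw [Submodule.mem_bot]
  by_contra hx0
  -- x ∈ filt 𝒜 1 means x = x₀ + x₁ with xᵢ ∈ 𝒜 i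
  have hfilt : filt 𝒜 1 = 𝒜 0 ⊔ 𝒜 1 := by
    apply le_antisymm
    · apply iSup₂_le; intro i hi
      interval_cases i
      · exact le_sup_left
      · exact le_sup_right
    · exact sup_le (le_iSup₂_of_le 0 (by norm_num) le_rfl)
        (le_iSup₂_of_le 1 le_rfl le_rfl)
  rw [hfilt] at hxF
  obtain ⟨x₀, hx₀, x₁, hx₁, rfl⟩ := Submodule.mem_sup.mp hxF
  set x := x₀ + x₁ with hxdef
  -- the support of x is contained in {0, 1}
  have hhigh : ∀ i, 2 ≤ i → GradedAlgebra.proj 𝒜 i x = 0 := by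
    intro i hi
    rw [hxdef, map_add, GradedAlgebra.proj_apply, GradedAlgebra.proj_apply,
      DirectSum.decompose_of_mem_ne 𝒜 hx₀ (by omega),
      DirectSum.decompose_of_mem_ne 𝒜 hx₁ (by omega), add_zero]
  set S : Set ℕ := {i | GradedAlgebra.proj 𝒜 i x ≠ 0} with hS
  have hSsub : ∀ i ∈ S, i ≤ 1 := by
    intro i hi
    by_contra h
    exact hi (hhigh i (by omega))
  have hSne : S.Nonempty := by
    by_contra h
    apply hx0
    classical
    have := DirectSum.sum_support_decompose 𝒜 x
    rw [← this]
    apply Finset.sum_eq_zero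
    intro i hi
    have : GradedAlgebra.proj 𝒜 i x = 0 := by
      by_contra hne
      exact h ⟨i, hne⟩
    rwa [GradedAlgebra.proj_apply] at this
  have hSbdd : BddAbove S := ⟨1, fun i hi => hSsub i hi⟩
  have hd : sSup S ∈ S := Nat.sSup_mem hSne hSbdd
  have hdle : sSup S ≤ 1 := hSsub _ hd
  -- LH x = proj (sSup S) x ≠ 0
  have hLH : LH 𝒜 x = GradedAlgebra.proj 𝒜 (sSup S) x := rfl
  -- LH x ∈ twoSidedSpan k (LH '' I)
  have hmem : LH 𝒜 x ∈ twoSidedSpan k (LH 𝒜 '' (twoSidedSpan k P : Set T)) := by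
    apply Submodule.subset_span
    exact ⟨1, 1, LH 𝒜 x, ⟨x, hxI, rfl⟩, by rw [one_mul, mul_one]⟩
  rw [← hPBW] at hmem
  have := hM _ hmem (sSup S) (by omega)
  rw [hLH, GradedAlgebra.proj_apply, GradedAlgebra.proj_apply,
    DirectSum.decompose_of_mem_same 𝒜 (SetLike.coe_mem _)] at this
  exact hd (by rwa [GradedAlgebra.proj_apply])
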